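/- Dominance under the sufficient condition implies dominance in the general sense: if L1 has cost and all resource accumulations no greater than L2 at the same vertex, and resource extension functions are monotone non-decreasing in the resource argument while feasibility bounds are upper bounds, then every feasible extension of L2 is also a feasible extension of L1 and yields cost no greater. -/
import Mathlib


/-- Update the resource state along a single edge. -/
def stepState {E R : Type*} (f : E → R → ℝ → ℝ) (e : E) (s : R → ℝ) : R → ℝ :=
  fun i => f e i (s i)

/-- Extend a resource state along a sequence of edges. -/
def extendState {E R : Type*} (f : E → R → ℝ → ℝ) : List E → (R → ℝ) → (R → ℝ)
  | [], s => s
  | e :: ε, s => extendState f ε (stepState f e s)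

/-- Feasibility: after each edge the resource values satisfy the upper bounds. -/
def feasAlong {E R : Type*} (f : E → R → ℝ → ℝ) (b : R → ℝ) :
    List E → (R → ℝ) → Prop
  | [], _ => True
  | e :: ε, s => (∀ i, stepState f e s i ≤ b i) ∧ feasAlong f b ε (stepState f e s)

theorem sufficient_dominance_implies_general {E R : Type*}
    (f : E → R → ℝ → ℝ) (c : E → ℝ) (b : R → ℝ)
    (hmono : ∀ e i, Monotone (f e i))
    (cost1 cost2 : ℝ) (s1 s2 : R → ℝ)
    (hcost : cost1 ≤ cost2) (hstate : ∀ i, s1 i ≤ s2 i) :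
    ∀ ε : List E, feasAlong f b ε s2 →
      feasAlong f b ε s1 ∧
        cost1 + (ε.map c).sum ≤ cost2 + (ε.map c).sum := by
  have key : ∀ ε : List E, ∀ t1 t2 : R → ℝ, (∀ i, t1 i ≤ t2 i) →
      feasAlong f b ε t2 → feasAlong f b ε t1 := by
    intro ε
    induction ε with
    | nil => intro t1 t2 _ _; trivial
    | cons e ε ih =>
      intro t1 t2 hle hfe
      obtain ⟨hb, hrest⟩ := hfe
      have hstep : ∀ i, stepState f e t1 i ≤ stepState f e t2 i :=
        fun i => hmono e i (hle i)
      exact ⟨fun i => (hstep i).trans (hb i), ih _ _ hstep hrest⟩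
  intro ε hfe
  exact ⟨key ε s1 s2 hstate hfe, by linarith⟩
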